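/- Every Hermitian positive semidefinite matrix M satisfies the principal submatrix rank property: for every subset S of indices, the column space of the rows of M indexed by S equals the column space of the principal submatrix M_{S×S}. -/

import Mathlib

open Matrix
open scoped ComplexOrder

/-- Auxiliary: the range of `(A * Aᴴ).mulVecLin` equals the range of `A.mulVecLin`. -/
lemma aux_range_self_mul_conjTranspose {m n : Type*} [Fintype m] [Fintype n]
    [DecidableEq m] (A : Matrix m n ℂ) :
    LinearMap.range (A * Aᴴ).mulVecLin = LinearMap.range A.mulVecLin := by
  have hle : LinearMap.range (A * Aᴴ).mulVecLin ≤ LinearMap.range A.mulVecLin := by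
    rw [Matrix.mulVecLin_mul]
    exact LinearMap.range_comp_le_range _ _
  have hrank : (A * Aᴴ).rank = A.rank := Matrix.rank_self_mul_conjTranspose A
  exact Submodule.eq_of_le_of_finrank_le hle (le_of_eq hrank.symm)

/-- Every Hermitian positive semidefinite matrix satisfies the principal submatrix
rank property: for every index set `S`, the span of the columns of the rows of `M`
indexed by `S` (vectors in `ℂ^S`) equals the span of the columns of the principal
submatrix `M_{S×S}`. -/
theorem stmt5 {N : ℕ} (M : Matrix (Fin N) (Fin N) ℂ) (hM : M.PosSemidef)
    (S : Finset (Fin N)) :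
    Submodule.span ℂ (Set.range fun j : Fin N => fun i : S => M (i : Fin N) j)
      = Submodule.span ℂ
          (Set.range fun j : S => fun i : S => M (i : Fin N) (j : Fin N)) := by
  obtain ⟨B, hB⟩ : ∃ B : Matrix (Fin N) (Fin N) ℂ, M = Bᴴ * B := by
    open MatrixOrder in exact CStarAlgebra.nonneg_iff_eq_star_mul_self.mp hM.nonneg
  -- `C` is the `S`-rows of `Bᴴ`
  set C : Matrix S (Fin N) ℂ := Bᴴ.submatrix (fun i : S => (i : Fin N)) id with hC
  -- `E` extends vectors on `S` by zero
  set E : Matrix (Fin N) S ℂ :=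
    (1 : Matrix (Fin N) (Fin N) ℂ).submatrix id (fun j : S => (j : Fin N)) with hE
  have hCH : Cᴴ = B.submatrix id (fun j : S => (j : Fin N)) := by
    ext j i
    simp [hC, hB, Matrix.conjTranspose_apply]
  have hCHE : Cᴴ = B * E := by
    rw [hCH, hE]
    ext j k
    simp [Matrix.mul_apply, Matrix.one_apply]
  -- column spans as ranges of mulVecLin
  have h1 : (fun j : Fin N => fun i : S => M (i : Fin N) j) = (C * B)ᵀ := by
    funext j
    funext i
    simp [hC, hB, Matrix.transpose_apply, Matrix.mul_apply, Matrix.conjTranspose_apply]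
  have h2 : (fun j : S => fun i : S => M (i : Fin N) (j : Fin N)) = (C * Cᴴ)ᵀ := by
    funext j
    funext i
    simp [hC, hCH, hB, Matrix.transpose_apply, Matrix.mul_apply, Matrix.conjTranspose_apply]
  rw [h1, h2]
  change Submodule.span ℂ (Set.range (C * B).col) = Submodule.span ℂ (Set.range (C * Cᴴ).col)
  rw [← Matrix.range_mulVecLin, ← Matrix.range_mulVecLin]
  rw [aux_range_self_mul_conjTranspose C]
  -- range (C*B) ≤ range C, and range C = range (C*Cᴴ) ≤ range (C*B)
  apply le_antisymm
  · rw [Matrix.mulVecLin_mul]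
    exact LinearMap.range_comp_le_range _ _
  · rw [← aux_range_self_mul_conjTranspose C]
    have : C * Cᴴ = (C * B) * E := by rw [Matrix.mul_assoc, ← hCHE]
    rw [this, Matrix.mulVecLin_mul]
    exact LinearMap.range_comp_le_range _ _
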